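/- Let G = (V,E) be a finite simple graph on V = {1,…,n} and let B₁,…,B_k ⊆ V with B₁ ∪ … ∪ B_k = V. Define H_j := B₁ ∪ … ∪ B_j, R_j := B_j \ H_{j−1}, S_j := H_{j−1} ∩ B_j (with H₀ := ∅). Assume: (a) for each 1 < i ≤ k there exists j < i with S_i ⊆ B_j; (b) each S_i induces a complete subgraph of G; and (c) for each 1 < j ≤ k, every path in the induced subgraph G_{H_j} from a vertex of H_{j−1} \ S_j to a vertex of R_j passes through a vertex of S_j. Let s := max_{1 ≤ i ≤ k} |S_i| and let f : ℝ → ℝ with f(0) = 0. If f[M] ∈ P_{G_{B_i}}(ℝ) for every M ∈ P_{G_{B_i}}(ℝ) and every 1 ≤ i ≤ k, and f[X+Y] − f[X] − f[Y] is positive semidefinite for all s×s real symmetric positive semidefinite matrices X, Y, then f[M] ∈ P_G(ℝ) for every M ∈ P_G(ℝ). -/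

import Mathlib

open Matrix

/-- Entrywise power with the convention `0 ^ α := 0` for all `α`. -/
noncomputable def powF (α x : ℝ) : ℝ := if x = 0 then 0 else x ^ α

/-- `ψ_α(x) := sgn(x) * |x| ^ α`, with `ψ_α(0) := 0`. -/
noncomputable def psiF (α x : ℝ) : ℝ := if x = 0 then 0 else Real.sign x * |x| ^ α

/-- `φ_α(x) := |x| ^ α`, with `φ_α(0) := 0`. -/
noncomputable def phiF (α x : ℝ) : ℝ := if x = 0 then 0 else |x| ^ α
/-- `P_G(I)`: symmetric positive semidefinite matrices with entries in `I`, vanishing at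
off-diagonal positions corresponding to non-edges of `G`. -/
def PG {V : Type*} [Fintype V] (G : SimpleGraph V) (I : Set ℝ) : Set (Matrix V V ℝ) :=
  {M | M.PosSemidef ∧ (∀ i j, M i j ∈ I) ∧ ∀ i j, i ≠ j → ¬ G.Adj i j → M i j = 0}

/-- `H_G`: powers `α` such that `A ↦ A^{∘α}` maps `P_G([0,∞))` into `P_G(ℝ)`. -/
noncomputable def HSet {V : Type*} [Fintype V] (G : SimpleGraph V) : Set ℝ :=
  {α | ∀ A ∈ PG G (Set.Ici 0), A.map (powF α) ∈ PG G Set.univ}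

/-- `H_G^ψ`: powers `α` such that `ψ_α[-]` maps `P_G(ℝ)` into `P_G(ℝ)`. -/
noncomputable def HSetPsi {V : Type*} [Fintype V] (G : SimpleGraph V) : Set ℝ :=
  {α | ∀ A ∈ PG G Set.univ, A.map (psiF α) ∈ PG G Set.univ}

/-- `H_G^φ`: powers `α` such that `φ_α[-]` maps `P_G(ℝ)` into `P_G(ℝ)`. -/
noncomputable def HSetPhi {V : Type*} [Fintype V] (G : SimpleGraph V) : Set ℝ :=
  {α | ∀ A ∈ PG G Set.univ, A.map (phiF α) ∈ PG G Set.univ}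

/-- A graph is chordal if every cycle of length at least 4 has a chord, i.e. an edge of `G`
joining two vertices of the cycle that is not an edge of the cycle. -/
def IsChordalG {V : Type*} (G : SimpleGraph V) : Prop :=
  ∀ ⦃v : V⦄ (w : G.Walk v v), w.IsCycle → 4 ≤ w.length →
    ∃ i j : V, i ∈ w.support ∧ j ∈ w.support ∧ G.Adj i j ∧ ¬ w.toSubgraph.Adj i j

/-- The history `H_{j-1} = B_0 ∪ ⋯ ∪ B_{j-1}` (0-indexed: `histFun B j = ⋃_{i < j} B i`). -/
def histFun {n k : ℕ} (B : Fin k → Finset (Fin n)) (j : ℕ) : Finset (Fin n) :=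
  (Finset.univ.filter fun i : Fin k => (i : ℕ) < j).biUnion B

/-- The separator `S_j = (B_0 ∪ ⋯ ∪ B_{j-1}) ∩ B_j`. -/
def sepFun {n k : ℕ} (B : Fin k → Finset (Fin n)) (j : Fin k) : Finset (Fin n) :=
  histFun B j ∩ B j

/-- The residual `R_j = B_j \ (B_0 ∪ ⋯ ∪ B_{j-1})`. -/
def resFun {n k : ℕ} (B : Fin k → Finset (Fin n)) (j : Fin k) : Finset (Fin n) :=
  B j \ histFun B j

/- ## auxiliary lemmas -/

lemma gram_posSemidef {E : Type*} [NormedAddCommGroup E] [InnerProductSpace ℝ E]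
    {ι : Type*} [Fintype ι] (v : ι → E) :
    (Matrix.of fun i j => (inner ℝ (v i) (v j) : ℝ)).PosSemidef := by
  refine posSemidef_iff_dotProduct_mulVec.mpr ⟨?_, ?_⟩
  · ext i j
    simp only [conjTranspose_apply, of_apply, star_trivial]
    exact real_inner_comm _ _
  · intro x
    have h : dotProduct (star x) ((Matrix.of fun i j => (inner ℝ (v i) (v j) : ℝ)) *ᵥ x)
        = (inner ℝ (∑ i, x i • v i) (∑ j, x j • v j) : ℝ) := by
      simp only [dotProduct, mulVec, star_trivial, of_apply, sum_inner, inner_sum,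
        real_inner_smul_left, real_inner_smul_right, dotProduct]
      refine Finset.sum_congr rfl fun i _ => ?_
      rw [Finset.mul_sum]
      refine Finset.sum_congr rfl fun j _ => ?_
      rw [real_inner_comm]; ring
    rw [h]
    exact real_inner_self_nonneg

lemma pad_posSemidef {ι V : Type*} [Fintype ι] [Fintype V] [DecidableEq V]
    (M : Matrix V V ℝ) (e : ι → V) (he : Function.Injective e)
    (hsupp : ∀ i j : V, i ∉ Set.range e ∨ j ∉ Set.range e → M i j = 0)
    (h : (M.submatrix e e).PosSemidef) :
    M.PosSemidef := by
  refine posSemidef_iff_dotProduct_mulVec.mpr ⟨?_, ?_⟩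
  · ext i j
    simp only [conjTranspose_apply, star_trivial]
    by_cases hi : i ∈ Set.range e
    · by_cases hj : j ∈ Set.range e
      · obtain ⟨a, rfl⟩ := hi
        obtain ⟨b, rfl⟩ := hj
        have := congrFun (congrFun h.1 a) b
        simpa [conjTranspose_apply] using this
      · rw [hsupp j i (Or.inl hj), hsupp i j (Or.inr hj)]
    · rw [hsupp j i (Or.inr hi), hsupp i j (Or.inl hi)]
  · intro x
    have key : dotProduct (star x) (M *ᵥ x) =
        dotProduct (star fun a : ι => x (e a))
          ((M.submatrix e e) *ᵥ fun a : ι => x (e a)) := by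
      simp only [dotProduct, mulVec, star_trivial, submatrix_apply, dotProduct]
      have inner_eq : ∀ i : V, (∑ j : V, M i j * x j) = ∑ b : ι, M i (e b) * x (e b) := by
        intro i
        calc ∑ j : V, M i j * x j
            = ∑ j ∈ Finset.univ.image e, M i j * x j :=
              (Finset.sum_subset (Finset.subset_univ _) (fun j _ hj => by
                rw [hsupp i j (Or.inr (by simp [Set.range] at hj; simpa using hj)),
                  zero_mul])).symm
          _ = ∑ b : ι, M i (e b) * x (e b) :=
              Finset.sum_image (fun a _ b _ hab => he hab)
      calc ∑ i : V, x i * ∑ j : V, M i j * x j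
          = ∑ i ∈ Finset.univ.image e, x i * ∑ j : V, M i j * x j :=
            (Finset.sum_subset (Finset.subset_univ _) (fun i _ hi => by
              have hz : ∀ j, M i j = 0 := fun j =>
                hsupp i j (Or.inl (by simp [Set.range] at hi; simpa using hi))
              simp [hz])).symm
        _ = ∑ a : ι, x (e a) * ∑ j : V, M (e a) j * x j :=
            Finset.sum_image (fun a _ b _ hab => he hab)
        _ = ∑ a : ι, x (e a) * ∑ b : ι, M (e a) (e b) * x (e b) :=
            Finset.sum_congr rfl fun a _ => by rw [inner_eq]
    rw [key]
    exact h.dotProduct_mulVec_nonneg _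

lemma mem_histFun {n k : ℕ} {B : Fin k → Finset (Fin n)} {m : ℕ} {v : Fin n} :
    v ∈ histFun B m ↔ ∃ i : Fin k, (i : ℕ) < m ∧ v ∈ B i := by
  simp [histFun]


/-- If `B_1, …, B_k` is a perfect ordering of the prime components of `G`, `s` is the
maximal size of a separator, and `f` (with `f(0) = 0`) preserves positivity on each
`P_{G_{B_i}}(ℝ)` and is Loewner super-additive on `P_s(ℝ)`, then `f[-]` preserves
positivity on `P_G(ℝ)`. -/
theorem stmt15 (n k : ℕ) (G : SimpleGraph (Fin n)) (B : Fin k → Finset (Fin n))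
    (hcover : ∀ v : Fin n, ∃ i : Fin k, v ∈ B i)
    (ha : ∀ i : Fin k, 0 < (i : ℕ) → ∃ j : Fin k, (j : ℕ) < (i : ℕ) ∧ sepFun B i ⊆ B j)
    (hb : ∀ i : Fin k, G.IsClique (sepFun B i : Set (Fin n)))
    (hc : ∀ j : Fin k, 0 < (j : ℕ) →
      ∀ a b : ((histFun B ((j : ℕ) + 1) : Finset (Fin n)) : Set (Fin n)),
        (a : Fin n) ∈ histFun B j \ sepFun B j → (b : Fin n) ∈ resFun B j →
        ∀ p : (G.induce ((histFun B ((j : ℕ) + 1) : Finset (Fin n)) : Set (Fin n))).Walk a b,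
          ∃ c ∈ p.support, (c : Fin n) ∈ sepFun B j)
    (s : ℕ) (hs : s = Finset.univ.sup fun i : Fin k => (sepFun B i).card)
    (f : ℝ → ℝ) (hf0 : f 0 = 0)
    (hpres : ∀ i : Fin k, ∀ M ∈ PG (G.induce ((B i : Finset (Fin n)) : Set (Fin n))) Set.univ,
      M.map f ∈ PG (G.induce ((B i : Finset (Fin n)) : Set (Fin n))) Set.univ)
    (hsuper : ∀ X Y : Matrix (Fin s) (Fin s) ℝ, X.PosSemidef → Y.PosSemidef →
      ((X + Y).map f - X.map f - Y.map f).PosSemidef) :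
    ∀ M ∈ PG G Set.univ, M.map f ∈ PG G Set.univ := by
  suffices key : ∀ m : ℕ, ∀ M : Matrix (Fin n) (Fin n) ℝ, M.PosSemidef →
      (∀ i j : Fin n, i ≠ j → ¬ G.Adj i j → M i j = 0) →
      (∀ i j : Fin n, i ∉ histFun B m ∨ j ∉ histFun B m → M i j = 0) →
      (M.map f).PosSemidef by
    rintro M ⟨hPSD, -, hvan⟩
    refine ⟨key k M hPSD hvan ?_, fun i j => trivial,
      fun i j hij hadj => by rw [Matrix.map_apply, hvan i j hij hadj, hf0]⟩
    intro i j hij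
    exfalso
    rcases hij with hi | hi
    · obtain ⟨l, hl⟩ := hcover i
      exact hi (mem_histFun.mpr ⟨l, l.isLt, hl⟩)
    · obtain ⟨l, hl⟩ := hcover j
      exact hi (mem_histFun.mpr ⟨l, l.isLt, hl⟩)
  intro m
  induction m with
  | zero =>
    intro M _ _ hsupp
    have : M.map f = 0 := by
      ext i j
      rw [Matrix.map_apply, hsupp i j (Or.inl (by simp [mem_histFun])), hf0]
      rfl
    rw [this]
    exact Matrix.PosSemidef.zero
  | succ m IH =>
    intro M hM hvan hsupp
    by_cases hmk : m < k
    case neg =>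
      refine IH M hM hvan ?_
      intro i j hij
      refine hsupp i j ?_
      rcases hij with hi | hi
      · refine Or.inl fun hmem => hi ?_
        obtain ⟨l, _, hl⟩ := mem_histFun.mp hmem
        exact mem_histFun.mpr ⟨l, lt_of_lt_of_le l.isLt (le_of_not_gt hmk), hl⟩
      · refine Or.inr fun hmem => hi ?_
        obtain ⟨l, _, hl⟩ := mem_histFun.mp hmem
        exact mem_histFun.mpr ⟨l, lt_of_lt_of_le l.isLt (le_of_not_gt hmk), hl⟩
    case pos =>
      set jj : Fin k := ⟨m, hmk⟩ with hjj
      -- union structure of the history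
      have hunion : ∀ v : Fin n, v ∈ histFun B (m + 1) ↔ v ∈ histFun B m ∨ v ∈ B jj := by
        intro v
        rw [mem_histFun]
        constructor
        · rintro ⟨l, hl, hv⟩
          rcases Nat.lt_succ_iff_lt_or_eq.mp hl with h | h
          · exact Or.inl (mem_histFun.mpr ⟨l, h, hv⟩)
          · refine Or.inr ?_
            have : l = jj := Fin.ext h
            rwa [this] at hv
        · rintro (hv | hv)
          · obtain ⟨l, hl, hv⟩ := mem_histFun.mp hv
            exact ⟨l, Nat.lt_succ_of_lt hl, hv⟩
          · exact ⟨jj, Nat.lt_succ_self m, hv⟩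
      have hsep : sepFun B jj = histFun B m ∩ B jj := rfl
      -- Gram representation of M
      obtain ⟨A, hA⟩ : ∃ A : Matrix (Fin n) (Fin n) ℝ, M = star A * A := by
        open scoped MatrixOrder in exact CStarAlgebra.nonneg_iff_eq_star_mul_self.mp hM.nonneg
      set c : Fin n → EuclideanSpace ℝ (Fin n) :=
        fun i => (WithLp.equiv 2 (Fin n → ℝ)).symm (fun r => A r i) with hcdef
      have hMc : ∀ i j : Fin n, M i j = (inner ℝ (c i) (c j) : ℝ) := by
        intro i j
        rw [hA]
        simp [hcdef, Matrix.mul_apply, PiLp.inner_apply, RCLike.inner_apply,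
          conjTranspose_apply, mul_comm]
      -- no edges between (histFun B m) \ B jj and resFun B jj
      have hNoAdj : ∀ a : Fin n, a ∈ histFun B m → a ∉ B jj →
          ∀ b : Fin n, b ∈ B jj → b ∉ histFun B m → ¬ G.Adj a b := by
        intro a ha haB b hb hbH hadj
        have hm0 : 0 < m := by
          obtain ⟨l, hl, _⟩ := mem_histFun.mp ha
          omega
        have haH1 : a ∈ histFun B (m + 1) := (hunion a).mpr (Or.inl ha)
        have hbH1 : b ∈ histFun B (m + 1) := (hunion b).mpr (Or.inr hb)
        have hadj' : (G.induce ((histFun B (m + 1) : Finset (Fin n)) : Set (Fin n))).Adj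
            ⟨a, haH1⟩ ⟨b, hbH1⟩ := by
          simp only [SimpleGraph.comap_adj, Function.Embedding.coe_subtype]
          exact hadj
        obtain ⟨cc, hccmem, hccS⟩ := hc jj hm0 ⟨a, haH1⟩ ⟨b, hbH1⟩
          (by
            rw [Finset.mem_sdiff]
            exact ⟨ha, fun hmem => haB (Finset.mem_inter.mp hmem).2⟩)
          (by
            simp only [resFun, Finset.mem_sdiff]
            exact ⟨hb, hbH⟩)
          (SimpleGraph.Walk.cons hadj' SimpleGraph.Walk.nil)
        simp only [SimpleGraph.Walk.support_cons, SimpleGraph.Walk.support_nil,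
          List.mem_cons, List.mem_singleton, List.not_mem_nil, or_false] at hccmem
        rcases hccmem with rfl | rfl
        · exact haB (Finset.mem_inter.mp hccS).2
        · exact hbH (Finset.mem_inter.mp hccS).1
      -- the subspace spanned by residual columns
      set K : Submodule ℝ (EuclideanSpace ℝ (Fin n)) :=
        Submodule.span ℝ (c '' {r : Fin n | r ∈ B jj ∧ r ∉ histFun B m}) with hKdef
      -- columns outside B jj are orthogonal to K
      have hMzero : ∀ i : Fin n, i ∉ B jj → ∀ r : Fin n, r ∈ B jj → r ∉ histFun B m →
          M i r = 0 := by
        intro i hiB r hrB hrH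
        by_cases hiH : i ∈ histFun B m
        · have hir : i ≠ r := fun h => hrH (h ▸ hiH)
          exact hvan i r hir (hNoAdj i hiH hiB r hrB hrH)
        · refine hsupp i r (Or.inl ?_)
          intro hmem
          rcases (hunion i).mp hmem with h | h
          · exact hiH h
          · exact hiB h
      have hcorth : ∀ i : Fin n, i ∉ B jj → c i ∈ Kᗮ := by
        intro i hiB
        rw [Submodule.mem_orthogonal]
        intro u hu
        induction hu using Submodule.span_induction with
        | mem u hu =>
          obtain ⟨r, ⟨hrB, hrH⟩, rfl⟩ := hu
          rw [real_inner_comm, ← hMc]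
          exact hMzero i hiB r hrB hrH
        | zero => exact inner_zero_left _
        | add u v _ _ hu hv => rw [inner_add_left, hu, hv, add_zero]
        | smul a u _ hu => rw [real_inner_smul_left, hu, mul_zero]
      have hPzero : ∀ i : Fin n, i ∉ B jj →
          ((K.orthogonalProjectionOnto (c i) : EuclideanSpace ℝ (Fin n))) = 0 := by
        intro i hiB
        rw [Submodule.orthogonalProjectionOnto_apply_of_mem_orthogonal (hcorth i hiB)]
        rfl
      have hPself : ∀ i : Fin n, i ∈ B jj → i ∉ histFun B m →
          ((K.orthogonalProjectionOnto (c i) : EuclideanSpace ℝ (Fin n))) = c i := by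
        intro i hiB hiH
        exact Submodule.starProjection_eq_self_iff.mpr
          (Submodule.subset_span ⟨i, ⟨hiB, hiH⟩, rfl⟩)
      -- the two Gram families
      set d : Fin n → EuclideanSpace ℝ (Fin n) := fun i =>
        if i ∈ B jj then (K.orthogonalProjectionOnto (c i) : EuclideanSpace ℝ (Fin n)) else 0
        with hddef
      set e : Fin n → EuclideanSpace ℝ (Fin n) := fun i =>
        if i ∈ histFun B m then
          c i - (K.orthogonalProjectionOnto (c i) : EuclideanSpace ℝ (Fin n)) else 0 with hedef
      set N₁ : Matrix (Fin n) (Fin n) ℝ :=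
        Matrix.of fun i j => (inner ℝ (e i) (e j) : ℝ) with hN1def
      set N₂ : Matrix (Fin n) (Fin n) ℝ :=
        Matrix.of fun i j => (inner ℝ (d i) (d j) : ℝ) with hN2def
      have hdK : ∀ i : Fin n, d i ∈ K := by
        intro i
        simp only [hddef]
        by_cases hi : i ∈ B jj
        · rw [if_pos hi]; exact SetLike.coe_mem _
        · rw [if_neg hi]; exact K.zero_mem
      have heK : ∀ i : Fin n, e i ∈ Kᗮ := by
        intro i
        simp only [hedef]
        by_cases hi : i ∈ histFun B m
        · rw [if_pos hi]; exact Submodule.sub_starProjection_mem_orthogonal _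
        · rw [if_neg hi]; exact Kᗮ.zero_mem
      have hcross : ∀ i j : Fin n, (inner ℝ (e i) (d j) : ℝ) = 0 := fun i j =>
        Submodule.inner_left_of_mem_orthogonal (hdK j) (heK i)
      have hcross2 : ∀ i j : Fin n, (inner ℝ (d i) (e j) : ℝ) = 0 := fun i j => by
        rw [real_inner_comm]; exact hcross j i
      have hsum : ∀ i : Fin n, i ∈ histFun B (m + 1) → e i + d i = c i := by
        intro i hi
        simp only [hedef, hddef]
        by_cases hiH : i ∈ histFun B m
        · rw [if_pos hiH]
          by_cases hiB : i ∈ B jj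
          · rw [if_pos hiB, sub_add_cancel]
          · rw [if_neg hiB, hPzero i hiB, sub_zero, add_zero]
        · have hiB : i ∈ B jj := by
            rcases (hunion i).mp hi with h | h
            · exact absurd h hiH
            · exact h
          rw [if_neg hiH, if_pos hiB, hPself i hiB hiH, zero_add]
      have hezero : ∀ i : Fin n, i ∉ histFun B m → e i = 0 := by
        intro i hi; rw [hedef]; exact if_neg hi
      have hdzero : ∀ i : Fin n, i ∉ B jj → d i = 0 := by
        intro i hi; rw [hddef]; exact if_neg hi
      have hsplit : ∀ i j : Fin n, M i j = N₁ i j + N₂ i j := by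
        intro i j
        by_cases hi : i ∈ histFun B (m + 1)
        · by_cases hj : j ∈ histFun B (m + 1)
          · rw [hMc, ← hsum i hi, ← hsum j hj]
            rw [inner_add_left, inner_add_right, inner_add_right]
            rw [hcross i j, hcross2 i j]
            simp only [hN1def, hN2def, of_apply]
            ring
          · have hj1 : j ∉ histFun B m := fun h => hj ((hunion j).mpr (Or.inl h))
            have hj2 : j ∉ B jj := fun h => hj ((hunion j).mpr (Or.inr h))
            rw [hsupp i j (Or.inr hj)]
            simp only [hN1def, hN2def, of_apply]
            rw [hezero j hj1, hdzero j hj2, inner_zero_right, inner_zero_right, add_zero]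
        · have hi1 : i ∉ histFun B m := fun h => hi ((hunion i).mpr (Or.inl h))
          have hi2 : i ∉ B jj := fun h => hi ((hunion i).mpr (Or.inr h))
          rw [hsupp i j (Or.inl hi)]
          simp only [hN1def, hN2def, of_apply]
          rw [hezero i hi1, hdzero i hi2, inner_zero_left, inner_zero_left, add_zero]
      -- properties of N₁
      have hN1psd : N₁.PosSemidef := gram_posSemidef e
      have hN1supp : ∀ i j : Fin n, i ∉ histFun B m ∨ j ∉ histFun B m → N₁ i j = 0 := by
        intro i j h
        simp only [hN1def, of_apply]
        rcases h with h | h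
        · rw [hezero i h, inner_zero_left]
        · rw [hezero j h, inner_zero_right]
      have hsepmem : ∀ i : Fin n, i ∈ histFun B m → i ∈ B jj →
          i ∈ ((sepFun B jj : Finset (Fin n)) : Set (Fin n)) := by
        intro i h1 h2
        exact Finset.mem_coe.mpr (hsep ▸ Finset.mem_inter.mpr ⟨h1, h2⟩)
      have hN1van : ∀ i j : Fin n, i ≠ j → ¬ G.Adj i j → N₁ i j = 0 := by
        intro i j hij hadj
        simp only [hN1def, of_apply]
        by_cases hiH : i ∈ histFun B m
        · by_cases hjH : j ∈ histFun B m
          · have hei : e i = c i - (K.orthogonalProjectionOnto (c i) : EuclideanSpace ℝ (Fin n)) := by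
              simp only [hedef]; rw [if_pos hiH]
            have hej : e j = c j - (K.orthogonalProjectionOnto (c j) : EuclideanSpace ℝ (Fin n)) := by
              simp only [hedef]; rw [if_pos hjH]
            by_cases hiB : i ∈ B jj
            · by_cases hjB : j ∈ B jj
              · exact absurd (hb jj (hsepmem i hiH hiB) (hsepmem j hjH hjB) hij) hadj
              · rw [hei, hej, hPzero j hjB, sub_zero, inner_sub_left]
                have h1 : (inner ℝ ((K.orthogonalProjectionOnto (c i) : EuclideanSpace ℝ (Fin n)))
                    (c j) : ℝ) = 0 :=
                  Submodule.inner_right_of_mem_orthogonal (SetLike.coe_mem _) (hcorth j hjB)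
                rw [h1, sub_zero, ← hMc i j]
                exact hvan i j hij hadj
            · rw [hei, hPzero i hiB, sub_zero, hej, inner_sub_right]
              have h1 : (inner ℝ (c i) ((K.orthogonalProjectionOnto (c j) :
                  EuclideanSpace ℝ (Fin n))) : ℝ) = 0 :=
                Submodule.inner_left_of_mem_orthogonal (SetLike.coe_mem _) (hcorth i hiB)
              rw [h1, sub_zero, ← hMc i j]
              exact hvan i j hij hadj
          · rw [hezero j hjH, inner_zero_right]
        · rw [hezero i hiH, inner_zero_left]
      have hfN1 : (N₁.map f).PosSemidef := IH N₁ hN1psd hN1van hN1supp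
      -- properties of N₂
      have hN2psd : N₂.PosSemidef := gram_posSemidef d
      have hN2supp : ∀ i j : Fin n, i ∉ B jj ∨ j ∉ B jj → N₂ i j = 0 := by
        intro i j h
        simp only [hN2def, of_apply]
        rcases h with h | h
        · rw [hdzero i h, inner_zero_left]
        · rw [hdzero j h, inner_zero_right]
      have hN2van : ∀ i j : Fin n, i ≠ j → ¬ G.Adj i j → N₂ i j = 0 := by
        intro i j hij hadj
        by_cases hiB : i ∈ B jj
        · by_cases hjB : j ∈ B jj
          · simp only [hN2def, of_apply]
            have hdi : d i = (K.orthogonalProjectionOnto (c i) : EuclideanSpace ℝ (Fin n)) := by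
              simp only [hddef]; rw [if_pos hiB]
            have hdj : d j = (K.orthogonalProjectionOnto (c j) : EuclideanSpace ℝ (Fin n)) := by
              simp only [hddef]; rw [if_pos hjB]
            by_cases hiH : i ∈ histFun B m
            · by_cases hjH : j ∈ histFun B m
              · exact absurd (hb jj (hsepmem i hiH hiB) (hsepmem j hjH hjB) hij) hadj
              · rw [hdi, hdj, hPself j hjB hjH, ← Submodule.starProjection_apply,
                  Submodule.inner_starProjection_left_eq_right, Submodule.starProjection_apply,
                  hPself j hjB hjH, ← hMc i j]
                exact hvan i j hij hadj
            · rw [hdi, hdj, hPself i hiB hiH, ← Submodule.starProjection_apply,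
                ← Submodule.inner_starProjection_left_eq_right, Submodule.starProjection_apply,
                hPself i hiB hiH, ← hMc i j]
              exact hvan i j hij hadj
          · exact hN2supp i j (Or.inr hjB)
        · exact hN2supp i j (Or.inl hiB)
      -- f[N₂] is PSD via hpres
      have hsubmem : (N₂.submatrix
          (fun a : ((B jj : Finset (Fin n)) : Set (Fin n)) => (a : Fin n))
          (fun a : ((B jj : Finset (Fin n)) : Set (Fin n)) => (a : Fin n)))
          ∈ PG (G.induce ((B jj : Finset (Fin n)) : Set (Fin n))) Set.univ := by
        refine ⟨hN2psd.submatrix _, fun _ _ => trivial, ?_⟩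
        intro a b hab hnadj
        refine hN2van a b (fun h => hab (Subtype.ext h)) ?_
        intro h
        exact hnadj (by
          simp only [SimpleGraph.comap_adj, Function.Embedding.coe_subtype]
          exact h)
      have hfN2 : (N₂.map f).PosSemidef := by
        refine pad_posSemidef (N₂.map f)
          (fun a : ((B jj : Finset (Fin n)) : Set (Fin n)) => (a : Fin n))
          Subtype.val_injective ?_ ?_
        · intro i j h
          rw [Matrix.map_apply]
          have hz : N₂ i j = 0 := by
            refine hN2supp i j ?_
            rcases h with h | h
            · refine Or.inl fun hmem => h ?_
              exact ⟨⟨i, Finset.mem_coe.mpr hmem⟩, rfl⟩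
            · refine Or.inr fun hmem => h ?_
              exact ⟨⟨j, Finset.mem_coe.mpr hmem⟩, rfl⟩
          rw [hz, hf0]
        · exact (hpres jj _ hsubmem).1
      -- the correction matrix C
      set C : Matrix (Fin n) (Fin n) ℝ := M.map f - N₁.map f - N₂.map f with hCdef
      have hCzero : ∀ i j : Fin n, N₁ i j = 0 ∨ N₂ i j = 0 → C i j = 0 := by
        intro i j h
        simp only [hCdef, Matrix.sub_apply, Matrix.map_apply]
        rw [hsplit i j]
        rcases h with h | h <;> rw [h] <;> simp [hf0]
      -- embed the separator into Fin s
      have hcard : Fintype.card {x // x ∈ sepFun B jj} ≤ Fintype.card (Fin s) := by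
        rw [Fintype.card_coe, Fintype.card_fin, hs]
        exact Finset.le_sup (f := fun i : Fin k => (sepFun B i).card) (Finset.mem_univ jj)
      obtain ⟨emb⟩ : Nonempty ({x // x ∈ sepFun B jj} ↪ Fin s) :=
        Function.Embedding.nonempty_of_card_le hcard
      set e' : Fin s → EuclideanSpace ℝ (Fin n) := fun a =>
        if h : ∃ i, emb i = a then e ↑(h.choose) else 0 with he'def
      set d' : Fin s → EuclideanSpace ℝ (Fin n) := fun a =>
        if h : ∃ i, emb i = a then d ↑(h.choose) else 0 with hd'def
      have he' : ∀ i : {x // x ∈ sepFun B jj}, e' (emb i) = e ↑i := by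
        intro i
        simp only [he'def]
        rw [dif_pos ⟨i, rfl⟩]
        have hspec := (⟨i, rfl⟩ : ∃ l, emb l = emb i).choose_spec
        rw [emb.injective hspec]
      have hd' : ∀ i : {x // x ∈ sepFun B jj}, d' (emb i) = d ↑i := by
        intro i
        simp only [hd'def]
        rw [dif_pos ⟨i, rfl⟩]
        have hspec := (⟨i, rfl⟩ : ∃ l, emb l = emb i).choose_spec
        rw [emb.injective hspec]
      set X : Matrix (Fin s) (Fin s) ℝ :=
        Matrix.of fun a b => (inner ℝ (e' a) (e' b) : ℝ) with hXdef
      set Y : Matrix (Fin s) (Fin s) ℝ :=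
        Matrix.of fun a b => (inner ℝ (d' a) (d' b) : ℝ) with hYdef
      have hZ : ((X + Y).map f - X.map f - Y.map f).PosSemidef :=
        hsuper X Y (gram_posSemidef e') (gram_posSemidef d')
      have hCsub : (C.submatrix (fun a : {x // x ∈ sepFun B jj} => (a : Fin n))
            (fun a : {x // x ∈ sepFun B jj} => (a : Fin n)))
          = ((X + Y).map f - X.map f - Y.map f).submatrix emb emb := by
        ext a b
        simp only [submatrix_apply, Matrix.sub_apply, Matrix.add_apply, Matrix.map_apply, hCdef,
          hXdef, hYdef, of_apply, he', hd']
        rw [hsplit (a : Fin n) (b : Fin n)]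
        simp only [hN1def, hN2def, of_apply]
      have hCpsd : C.PosSemidef := by
        refine pad_posSemidef C (fun a : {x // x ∈ sepFun B jj} => (a : Fin n))
          Subtype.val_injective ?_ (by rw [hCsub]; exact hZ.submatrix emb)
        intro i j h
        apply hCzero
        rcases h with h | h
        · have hi' : i ∉ sepFun B jj := fun hmem => h ⟨⟨i, hmem⟩, rfl⟩
          by_cases hiH : i ∈ histFun B m
          · refine Or.inr (hN2supp i j (Or.inl fun hiB => ?_))
            exact hi' (hsep ▸ Finset.mem_inter.mpr ⟨hiH, hiB⟩)
          · exact Or.inl (hN1supp i j (Or.inl hiH))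
        · have hj' : j ∉ sepFun B jj := fun hmem => h ⟨⟨j, hmem⟩, rfl⟩
          by_cases hjH : j ∈ histFun B m
          · refine Or.inr (hN2supp i j (Or.inr fun hjB => ?_))
            exact hj' (hsep ▸ Finset.mem_inter.mpr ⟨hjH, hjB⟩)
          · exact Or.inl (hN1supp i j (Or.inr hjH))
      have hdecomp : M.map f = N₁.map f + N₂.map f + C := by
        rw [hCdef]; abel
      rw [hdecomp]
      exact (hfN1.add hfN2).add hCpsd
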